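/- Every cluster ⋈ chordal graph is 2-simplicial: if a graph G = (V, E1 ∪ E2) is the edge-wise union of a chordal graph (V, E1) and a cluster graph (V, E2), then there is an ordering v_1,…,v_n of V such that for each i, the closed later neighborhood N_G[v_i] ∩ {v_i,…,v_n} can be covered by at most 2 cliques of G. -/

import Mathlib

/-- `G` has an induced cycle on `n` vertices. -/
def HasInducedCycle {V : Type*} (G : SimpleGraph V) (n : ℕ) : Prop :=
  ∃ f : ZMod n → V, Function.Injective f ∧
    ∀ i j : ZMod n, G.Adj (f i) (f j) ↔ (j = i + 1 ∨ i = j + 1)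

namespace CCaux
variable {V : Type*} (G : SimpleGraph V)

def Simp (s : Finset V) (v : V) : Prop :=
  ∀ a ∈ s, ∀ b ∈ s, G.Adj v a → G.Adj v b → a ≠ b → G.Adj a b

lemma no_cycle_list (h : ∀ n, 4 ≤ n → ¬ HasInducedCycle G n)
    (C : List V) (h4 : 4 ≤ C.length) (hnd : C.Nodup)
    (hc : ∀ (a b : ℕ) (ha : a < C.length) (hb : b < C.length),
      G.Adj (C[a]'ha) (C[b]'hb) ↔ ((a+1) % C.length = b ∨ (b+1) % C.length = a)) :
    False := by
  haveI : NeZero C.length := ⟨by omega⟩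
  haveI : Fact (1 < C.length) := ⟨by omega⟩
  apply h C.length h4
  refine ⟨fun i => C[i.val]'(ZMod.val_lt i), ?_, ?_⟩
  · intro i j hij
    apply ZMod.val_injective
    have hinj := List.nodup_iff_injective_get.1 hnd
    have : (⟨i.val, ZMod.val_lt i⟩ : Fin C.length) = ⟨j.val, ZMod.val_lt j⟩ :=
      hinj (by simpa [List.get_eq_getElem] using hij)
    simpa using congrArg Fin.val this
  · have key : ∀ i j : ZMod C.length, ((i.val + 1) % C.length = j.val ↔ j = i + 1) := by
      intro i j
      have h1 : (i + 1 : ZMod C.length).val = (i.val + 1) % C.length := by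
        rw [ZMod.val_add, ZMod.val_one]
      constructor
      · intro hh
        apply (ZMod.val_injective C.length)
        rw [h1, hh]
      · intro hh
        rw [hh, h1]
    intro i j
    rw [hc i.val j.val (ZMod.val_lt i) (ZMod.val_lt j)]
    exact or_congr (key i j) (key j i)


lemma len_shape (x y : V) (m : List V) : (x :: m ++ [y]).length = m.length + 2 := by simp

lemma get_mid (x y : V) (m : List V) (i : ℕ) (hi : i < m.length) :
    (x :: m ++ [y])[i+1]'(by simp; omega) = m[i] := by
  simp [List.getElem_cons_succ, List.getElem_append_left hi]

lemma get_last (x y : V) (m : List V) :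
    (x :: m ++ [y])[m.length+1]'(by simp) = y := by
  simp

lemma chain_adj {l : List V} (hch : List.Chain' G.Adj l) (i j : ℕ)
    (hi : i < l.length) (hj : j < l.length) (hji : j = i + 1) :
    G.Adj (l[i]'hi) (l[j]'hj) := by
  subst hji
  have := List.isChain_iff_getElem.1 hch i (by omega)
  simpa [List.get_eq_getElem] using this

lemma getElem_congr' {l : List V} {i j : ℕ} (hi : i < l.length) (hj : j < l.length)
    (h : i = j) : l[i]'hi = l[j]'hj := by subst h; rfl

lemma splice (x y : V) (m : List V) (hch : List.Chain' G.Adj (x :: m ++ [y]))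
    (s q : ℕ) (h1s : 1 ≤ s) (hsq : s < q) (hq : q ≤ m.length + 1)
    (hne : 2 ≤ s ∨ q ≤ m.length)
    (hadj : G.Adj ((x::m++[y])[s-1]'(by simp; omega)) ((x::m++[y])[q]'(by simp; omega))) :
    (m.take (s-1) ++ m.drop (q-1)) ≠ [] ∧
    (m.take (s-1) ++ m.drop (q-1)).length < m.length ∧
    List.Chain' G.Adj (x :: (m.take (s-1) ++ m.drop (q-1)) ++ [y]) := by
  have hs1 : s - 1 ≤ m.length := by omega
  have hq1 : q - 1 ≤ m.length := by omega
  have hlen : (m.take (s-1) ++ m.drop (q-1)).length = (s-1) + (m.length - (q-1)) := by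
    simp [List.length_take, List.length_drop]; omega
  refine ⟨?_, ?_, ?_⟩
  · intro hnil
    have := congrArg List.length hnil
    rw [hlen] at this
    simp at this
    omega
  · rw [hlen]; omega
  · have hid : x :: (m.take (s-1) ++ m.drop (q-1)) ++ [y]
        = (x :: m ++ [y]).take s ++ (x :: m ++ [y]).drop q := by
      have h1 : (x :: m ++ [y]).take s = x :: m.take (s-1) := by
        obtain ⟨s', rfl⟩ : ∃ s', s = s' + 1 := ⟨s - 1, by omega⟩
        simp [List.take_cons, List.take_append_of_le_length (by omega : s' ≤ m.length)]
      have h2 : (x :: m ++ [y]).drop q = m.drop (q-1) ++ [y] := by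
        obtain ⟨q', rfl⟩ : ∃ q', q = q' + 1 := ⟨q - 1, by omega⟩
        simp [List.drop_succ_cons, List.drop_append_of_le_length (by omega : q' ≤ m.length)]
      rw [h1, h2]
      simp
    rw [hid]
    rw [List.Chain', List.isChain_append]
    refine ⟨hch.prefix (List.take_prefix _ _), hch.suffix (List.drop_suffix _ _), ?_⟩
    intro a ha b hb
    have hlast : ((x :: m ++ [y]).take s).getLast? = some ((x::m++[y])[s-1]'(by simp; omega)) := by
      rw [List.getLast?_take]
      simp only [if_neg (by omega : ¬ s = 0)]
      rw [List.getElem?_eq_getElem (by simp; omega)]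
      rfl
    have hhead : ((x :: m ++ [y]).drop q).head? = some ((x::m++[y])[q]'(by simp; omega)) := by
      rw [List.head?_drop, List.getElem?_eq_getElem (by simp; omega)]
    rw [hlast] at ha
    rw [hhead] at hb
    simp at ha hb
    rw [← ha, ← hb]
    exact hadj


def Cand (A : Set V) (x y : V) (m : List V) : Prop :=
  m ≠ [] ∧ (∀ z ∈ m, z ∈ A) ∧ List.Chain' G.Adj (x :: m ++ [y])

lemma exists_chordless (A : Set V) (x y : V)
    (hxy : ¬ G.Adj x y) (hxA : x ∉ A) (hyA : y ∉ A) (hne : x ≠ y)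
    (hex : ∃ m, Cand G A x y m) :
    ∃ m, Cand G A x y m ∧ (x :: m ++ [y]).Nodup ∧
      ∀ (i j : ℕ) (hi : i < (x::m++[y]).length) (hj : j < (x::m++[y]).length),
        i + 1 < j → ¬ G.Adj ((x::m++[y])[i]'hi) ((x::m++[y])[j]'hj) := by
  classical
  obtain ⟨m0, hm0⟩ := hex
  have main : ∀ (N : ℕ) (m : List V), m.length ≤ N → Cand G A x y m →
      ∃ m, Cand G A x y m ∧ (x :: m ++ [y]).Nodup ∧
      ∀ (i j : ℕ) (hi : i < (x::m++[y]).length) (hj : j < (x::m++[y]).length),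
        i + 1 < j → ¬ G.Adj ((x::m++[y])[i]'hi) ((x::m++[y])[j]'hj) := by
    intro N
    induction N with
    | zero =>
      intro m hlen hc
      exact absurd (List.length_eq_zero_iff.1 (by omega)) hc.1
    | succ N ih =>
      intro m hlen hc
      obtain ⟨hm_ne, hmA, hch⟩ := hc
      set l := x :: m ++ [y] with hl
      have hlenl : l.length = m.length + 2 := by simp [hl]
      -- description of entries of l
      have hent : ∀ (i : ℕ) (hi : i < l.length),
          (i = 0 ∧ l[i]'hi = x) ∨ (1 ≤ i ∧ ∃ (him : i - 1 < m.length), l[i]'hi = m[i-1]'him) ∨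
          (i = m.length + 1 ∧ l[i]'hi = y) := by
        intro i hi
        rcases Nat.eq_zero_or_pos i with h0 | h0
        · subst h0; exact Or.inl ⟨rfl, rfl⟩
        · rcases Nat.lt_or_ge i (m.length + 1) with hlt | hge
          · refine Or.inr (Or.inl ⟨h0, by omega, ?_⟩)
            have h2 := get_mid x y m (i-1) (by omega)
            exact (getElem_congr' (l := x :: m ++ [y]) (by rw [hl] at hi; exact hi)
              (by simp; omega) (by omega)).trans h2
          · have : i = m.length + 1 := by omega
            subst this
            exact Or.inr (Or.inr ⟨rfl, get_last x y m⟩)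
      by_cases hnd : l.Nodup
      · by_cases hchord : ∀ (i j : ℕ) (hi : i < l.length) (hj : j < l.length),
            i + 1 < j → ¬ G.Adj (l[i]'hi) (l[j]'hj)
        · exact ⟨m, ⟨hm_ne, hmA, hch⟩, hnd, hchord⟩
        · push_neg at hchord
          obtain ⟨i, j, hi, hj, hij, hadj⟩ := hchord
          -- not (i = 0 and j = last)
          have hnotends : ¬ (i = 0 ∧ j = m.length + 1) := by
            rintro ⟨rfl, rfl⟩
            have e1 : l[0]'hi = x := rfl
            have e2 : l[m.length+1]'hj = y := get_last x y m
            rw [e1, e2] at hadj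
            exact hxy hadj
          have hji : j ≤ m.length + 1 := by omega
          have h2 : 2 ≤ i + 1 ∨ j ≤ m.length := by omega
          obtain ⟨h1, h2', h3⟩ := splice G x y m hch (i+1) j (by omega) (by omega) hji h2
            (by simpa [hl] using hadj)
          have := ih (m.take (i+1-1) ++ m.drop (j-1))
            (Nat.lt_succ_iff.mp (lt_of_lt_of_le h2' hlen))
            ⟨h1, fun z hz => by
              rcases List.mem_append.1 hz with h | h
              · exact hmA z ((List.take_sublist _ _).mem h)
              · exact hmA z ((List.drop_sublist _ _).mem h), h3⟩
          exact this
      · -- duplicate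
        rw [List.nodup_iff_injective_get] at hnd
        rw [Function.not_injective_iff] at hnd
        obtain ⟨i0, j0, heq, hne0⟩ := hnd
        -- wlog i0 < j0
        obtain ⟨i, j, hij, heq⟩ : ∃ (i j : Fin l.length), i < j ∧ l.get i = l.get j := by
          rcases lt_or_gt_of_ne hne0 with h | h
          · exact ⟨i0, j0, h, heq⟩
          · exact ⟨j0, i0, h, heq.symm⟩
        simp only [List.get_eq_getElem] at heq
        -- both are in m
        have hxm : x ∉ m := fun h => hxA (hmA x h)
        have hym : y ∉ m := fun h => hyA (hmA y h)
        have hib : 1 ≤ (i:ℕ) ∧ (j:ℕ) ≤ m.length := by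
          constructor
          · by_contra h0
            have hi0 : (i:ℕ) = 0 := by omega
            have hix : l[(i:ℕ)]'i.isLt = x :=
              (getElem_congr' i.isLt (by omega) hi0).trans rfl
            rcases hent j j.isLt with ⟨hj0, _⟩ | ⟨hj1, hjv⟩ | ⟨hj1, hjv⟩
            · omega
            · obtain ⟨hj2, hjv⟩ := hjv
              apply hxm
              rw [hix, hjv] at heq
              rw [heq]
              exact List.getElem_mem _
            · rw [hix, hjv] at heq
              exact absurd heq hne
          · by_contra h0
            have hj0 : (j:ℕ) = m.length + 1 := by omega
            have hjy : l[(j:ℕ)]'j.isLt = y :=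
              (getElem_congr' j.isLt (by omega) hj0).trans (get_last x y m)
            rcases hent i i.isLt with ⟨hi0, hiv⟩ | ⟨hi1, hiv⟩ | ⟨hi1, _⟩
            · rw [hjy, hiv] at heq
              exact absurd heq hne
            · obtain ⟨hi2, hiv⟩ := hiv
              apply hym
              rw [hjy, hiv] at heq
              rw [← heq]
              exact List.getElem_mem _
            · omega
        -- adjacency for splice: Adj l[i-1] l[j]
        have hadj : G.Adj (l[(i:ℕ)-1]'(by omega)) (l[(j:ℕ)]'j.isLt) := by
          rw [← heq]
          exact chain_adj G hch ((i:ℕ)-1) i (by omega) i.isLt (by omega)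
        obtain ⟨h1, h2', h3⟩ := splice G x y m hch i j hib.1 hij (by omega) (Or.inr hib.2)
          (by simpa [hl] using hadj)
        exact ih (m.take ((i:ℕ)-1) ++ m.drop ((j:ℕ)-1))
          (Nat.lt_succ_iff.mp (lt_of_lt_of_le h2' hlen))
          ⟨h1, fun z hz => by
            rcases List.mem_append.1 hz with h | h
            · exact hmA z ((List.take_sublist _ _).mem h)
            · exact hmA z ((List.drop_sublist _ _).mem h), h3⟩
  exact main m0.length m0 le_rfl hm0


lemma sep_cycle_false (h : ∀ n, 4 ≤ n → ¬ HasInducedCycle G n)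
    (A B : Set V) (x y : V) (mA mB : List V)
    (hAmem : ∀ z ∈ mA, z ∈ A) (hBmem : ∀ z ∈ mB, z ∈ B)
    (hAne : mA ≠ []) (hBne : mB ≠ [])
    (hxB : x ∉ B) (hyA : y ∉ A) (hdisj : ∀ z, z ∈ A → z ∉ B)
    (hABadj : ∀ a ∈ A, ∀ b ∈ B, ¬ G.Adj a b)
    (hndA : (x :: mA ++ [y]).Nodup) (hndB : (y :: mB ++ [x]).Nodup)
    (hchA : List.Chain' G.Adj (x :: mA ++ [y])) (hchB : List.Chain' G.Adj (y :: mB ++ [x]))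
    (hncA : ∀ (i j : ℕ) (hi : i < (x::mA++[y]).length) (hj : j < (x::mA++[y]).length),
        i + 1 < j → ¬ G.Adj ((x::mA++[y])[i]'hi) ((x::mA++[y])[j]'hj))
    (hncB : ∀ (i j : ℕ) (hi : i < (y::mB++[x]).length) (hj : j < (y::mB++[x]).length),
        i + 1 < j → ¬ G.Adj ((y::mB++[x])[i]'hi) ((y::mB++[x])[j]'hj)) :
    False := by
  have hLA : 1 ≤ mA.length := List.length_pos_iff.2 hAne
  have hLB : 1 ≤ mB.length := List.length_pos_iff.2 hBne
  have hClen : (x :: mA ++ y :: mB).length = mA.length + mB.length + 2 := by simp; omega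
  have htake : (x :: mA ++ y :: mB).take (mA.length + 2) = x :: mA ++ [y] := by
    simp [List.take_append, List.take_of_length_le (by omega : mA.length ≤ mA.length + 1)]
  have hdrop : (x :: mA ++ y :: mB).drop (mA.length + 1) = y :: mB := by
    simp [List.drop_append]
  have bA : ∀ (p : ℕ), p < mA.length + 2 →
      ∀ {hC : p < (x :: mA ++ y :: mB).length} {hA : p < (x :: mA ++ [y]).length},
      (x :: mA ++ y :: mB)[p]'hC = (x :: mA ++ [y])[p]'hA := by
    intro p hp hC hA
    calc (x :: mA ++ y :: mB)[p]'hC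
        = ((x :: mA ++ y :: mB).take (mA.length+2))[p]'(by rw [htake]; exact hA) :=
          List.getElem_take.symm
      _ = (x :: mA ++ [y])[p]'hA := List.getElem_of_eq htake _
  have bB : ∀ (q : ℕ), q < mB.length + 1 →
      ∀ {hC : mA.length+1+q < (x :: mA ++ y :: mB).length} {hB : q < (y :: mB ++ [x]).length},
      (x :: mA ++ y :: mB)[mA.length+1+q]'hC = (y :: mB ++ [x])[q]'hB := by
    intro q hq hC hB
    calc (x :: mA ++ y :: mB)[mA.length+1+q]'hC
        = ((x :: mA ++ y :: mB).drop (mA.length+1))[q]'(by rw [hdrop]; simp; omega) :=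
          List.getElem_drop.symm
      _ = (y :: mB)[q]'(by simp; omega) := List.getElem_of_eq hdrop _
      _ = ((y :: mB) ++ [x])[q]'(by simp; omega) := (List.getElem_append_left (by simp; omega)).symm
  have bx : ∀ {hC : 0 < (x :: mA ++ y :: mB).length},
      (x :: mA ++ y :: mB)[0]'hC = (y :: mB ++ [x])[mB.length+1]'(by simp) := by
    intro hC
    exact (get_last y x mB).symm
  have hadjC : ∀ (p : ℕ) (hp1 : p + 1 < (x :: mA ++ y :: mB).length)
      (hp : p < (x :: mA ++ y :: mB).length),
      G.Adj ((x :: mA ++ y :: mB)[p]'hp) ((x :: mA ++ y :: mB)[p+1]'hp1) := by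
    intro p hp1 hp
    rcases Nat.lt_or_ge (p+1) (mA.length+2) with hsm | hbig
    · rw [bA p (by omega), bA (p+1) hsm]
      exact chain_adj G hchA p (p+1) (by simp; omega) (by simp; omega) rfl
    · obtain ⟨q, rfl⟩ : ∃ q, p = mA.length+1+q := ⟨p - (mA.length+1), by omega⟩
      have e2 : (x :: mA ++ y :: mB)[mA.length+1+q+1]'hp1
          = (y :: mB ++ [x])[q+1]'(by simp; omega) :=
        (getElem_congr' hp1 (by omega) (by omega)).trans (bB (q+1) (by omega))
      rw [bB q (by omega), e2]
      exact chain_adj G hchB q (q+1) (by simp; omega) (by simp; omega) rfl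
  have key : ∀ (a b : ℕ) (ha : a < (x :: mA ++ y :: mB).length)
      (hb : b < (x :: mA ++ y :: mB).length), a < b →
      (G.Adj ((x :: mA ++ y :: mB)[a]'ha) ((x :: mA ++ y :: mB)[b]'hb) ↔
        (b = a + 1 ∨ (a = 0 ∧ b = (x :: mA ++ y :: mB).length - 1))) := by
    intro a b ha hb hab
    constructor
    · intro hadj
      by_contra hcon
      push_neg at hcon
      obtain ⟨hb1, hcon2⟩ := hcon
      have hab1 : a + 1 < b := by omega
      rcases Nat.lt_or_ge b (mA.length+2) with hbA | hbB
      · refine hncA a b (by simp; omega) (by simp; omega) hab1 ?_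
        rw [← bA a (by omega), ← bA b hbA]
        exact hadj
      · rcases Nat.lt_or_ge a (mA.length+1) with haA | haB
        · rcases Nat.eq_zero_or_pos a with rfl | ha1
          · have hbn : b < (x :: mA ++ y :: mB).length - 1 := by
              have := hcon2 rfl
              omega
            obtain ⟨q, rfl⟩ : ∃ q, b = mA.length+1+q := ⟨b - (mA.length+1), by omega⟩
            refine hncB q (mB.length+1) (by simp; omega) (by simp) (by omega) ?_
            have e1 : (x :: mA ++ y :: mB)[mA.length+1+q]'hb
                = (y :: mB ++ [x])[q]'(by simp; omega) := bB q (by omega)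
            rw [e1, bx] at hadj
            exact hadj.symm
          · have haA' : (x :: mA ++ y :: mB)[a]'ha ∈ A := by
              have e : (x :: mA ++ y :: mB)[a]'ha = (x :: mA ++ [y])[a]'(by simp; omega) :=
                bA a (by omega)
              have e2 : (x :: mA ++ [y])[a]'(by simp; omega) = mA[a-1]'(by omega) :=
                (getElem_congr' (by simp; omega) (by simp; omega) (by omega)).trans
                  (get_mid x y mA (a-1) (by omega))
              rw [e, e2]
              exact hAmem _ (List.getElem_mem _)
            have hbB' : (x :: mA ++ y :: mB)[b]'hb ∈ B := by
              obtain ⟨q, rfl⟩ : ∃ q, b = mA.length+1+q := ⟨b - (mA.length+1), by omega⟩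
              have e : (x :: mA ++ y :: mB)[mA.length+1+q]'hb
                  = (y :: mB ++ [x])[q]'(by simp; omega) := bB q (by omega)
              have e2 : (y :: mB ++ [x])[q]'(by simp; omega) = mB[q-1]'(by omega) :=
                (getElem_congr' (by simp; omega) (by simp; omega) (by omega)).trans
                  (get_mid y x mB (q-1) (by omega))
              rw [e, e2]
              exact hBmem _ (List.getElem_mem _)
            exact hABadj _ haA' _ hbB' hadj
        · obtain ⟨qa, rfl⟩ : ∃ qa, a = mA.length+1+qa := ⟨a - (mA.length+1), by omega⟩
          obtain ⟨qb, rfl⟩ : ∃ qb, b = mA.length+1+qb := ⟨b - (mA.length+1), by omega⟩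
          refine hncB qa qb (by simp; omega) (by simp; omega) (by omega) ?_
          rw [← bB qa (by omega), ← bB qb (by omega)]
          exact hadj
    · rintro (rfl | ⟨rfl, rfl⟩)
      · exact hadjC a hb ha
      · have e2 : (x :: mA ++ y :: mB)[(x :: mA ++ y :: mB).length - 1]'hb
            = (y :: mB ++ [x])[mB.length]'(by simp only [List.length_append, List.length_cons]; omega) :=
          (getElem_congr' hb (by omega) (by omega)).trans (bB mB.length (by omega))
        rw [e2, bx]
        exact (chain_adj G hchB mB.length (mB.length+1)
          (by simp only [List.length_append, List.length_cons]; omega)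
          (by simp only [List.length_append, List.length_cons]; omega) rfl).symm
  -- Nodup
  have hymB : y ∉ mB := by
    have h1 := (List.nodup_cons.1 hndB).1
    intro hy
    exact h1 (by simp [hy])
  have hnd : (x :: mA ++ y :: mB).Nodup := by
    rw [show x :: mA ++ y :: mB = (x :: mA ++ [y]) ++ mB by simp]
    have hmBnd : mB.Nodup := by
      have hsub : mB.Sublist (y :: mB ++ [x]) :=
        ((mB.sublist_append_left [x]).cons y)
      exact hsub.nodup hndB
    refine List.Nodup.append hndA hmBnd ?_
    intro z hz hz2
    have hzB : z ∈ B := hBmem z hz2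
    rcases List.mem_cons.1 hz with rfl | hz'
    · exact hxB hzB
    · rcases List.mem_append.1 hz' with hz3 | hz3
      · exact hdisj z (hAmem z hz3) hzB
      · rw [List.mem_singleton.1 hz3] at hz2
        exact hymB hz2
  have hcyc : ∀ (a b : ℕ) (ha : a < (x :: mA ++ y :: mB).length)
      (hb : b < (x :: mA ++ y :: mB).length),
      G.Adj ((x :: mA ++ y :: mB)[a]'ha) ((x :: mA ++ y :: mB)[b]'hb) ↔
        ((a+1) % (x :: mA ++ y :: mB).length = b ∨ (b+1) % (x :: mA ++ y :: mB).length = a) := by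
    have mod1 : ∀ c : ℕ, c < (x :: mA ++ y :: mB).length →
        (c+1) % (x :: mA ++ y :: mB).length
          = if c = (x :: mA ++ y :: mB).length - 1 then 0 else c+1 := by
      intro c hc
      split
      · next hce => rw [show c+1 = (x :: mA ++ y :: mB).length by omega]; exact Nat.mod_self _
      · next hce => exact Nat.mod_eq_of_lt (by omega)
    intro a b ha hb
    rcases lt_trichotomy a b with hab | rfl | hab
    · rw [key a b ha hb hab, mod1 a (by omega), mod1 b (by omega)]
      split_ifs <;> omega
    · constructor
      · intro hadj
        exact absurd hadj (G.irrefl)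
      · intro hmod
        rw [mod1 a (by omega)] at hmod
        split_ifs at hmod <;> omega
    · rw [G.adj_comm, key b a hb ha hab, mod1 a (by omega), mod1 b (by omega)]
      split_ifs <;> omega
  exact no_cycle_list G h _ (by omega) hnd hcyc


def Rel (T : Set V) (p q : V) : Prop := G.Adj p q ∧ p ∈ T ∧ q ∈ T

lemma rel_symm (T : Set V) : Symmetric (Rel G T) :=
  fun _ _ ⟨h, hp, hq⟩ => ⟨h.symm, hq, hp⟩

def Cmp (T : Set V) (c : V) : Set V := {w | w ∈ T ∧ Relation.ReflTransGen (Rel G T) c w}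

lemma chain_snoc {r : V → V → Prop} {w : V} : ∀ (u : V) (l : List V), List.Chain r u l →
    r ((u :: l).getLast (by simp)) w → List.Chain r u (l ++ [w]) := by
  intro u l
  induction l generalizing u with
  | nil =>
    intro _ h
    exact List.chain_cons.2 ⟨by simpa using h, List.Chain.nil⟩
  | cons b t ihl =>
    intro hch hlast
    simp only [List.Chain, List.chain_cons] at hch
    refine List.chain_cons.2 ⟨hch.1, ihl b hch.2 ?_⟩
    rwa [List.getLast_cons_cons] at hlast

lemma cand_of_conn (A : Set V) (x y ax ay : V)
    (hx : G.Adj x ax) (hy : G.Adj y ay) (haxA : ax ∈ A)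
    (hconn : Relation.ReflTransGen (Rel G A) ax ay) :
    ∃ m, m ≠ [] ∧ (∀ z ∈ m, z ∈ A) ∧ List.Chain' G.Adj (x :: m ++ [y]) := by
  obtain ⟨l, hchain, hlast⟩ := List.exists_isChain_cons_of_relationReflTransGen hconn
  refine ⟨ax :: l, by simp, ?_, ?_⟩
  · intro z hz
    have hmem : ∀ (u : V) (l' : List V), List.Chain (Rel G A) u l' → ∀ z ∈ l', z ∈ A := by
      intro u l'
      induction l' generalizing u with
      | nil => simp
      | cons b t ihl =>
        intro hch z hz
        simp only [List.Chain, List.chain_cons] at hch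
        rcases List.mem_cons.1 hz with rfl | hz
        · exact hch.1.2.2
        · exact ihl b hch.2 z hz
    rcases List.mem_cons.1 hz with rfl | hz
    · exact haxA
    · exact hmem ax l hchain z hz
  · show List.Chain G.Adj x ((ax :: l) ++ [y])
    rw [List.cons_append]
    refine List.chain_cons.2 ⟨hx, ?_⟩
    refine chain_snoc ax l (hchain.imp fun a b h => h.1) ?_
    rw [hlast]
    exact hy.symm

lemma upgrade (T : Set V) (c : V) : ∀ w, Relation.ReflTransGen (Rel G T) c w →
    Relation.ReflTransGen (Rel G (Cmp G T c)) c w := by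
  intro w hw
  induction hw with
  | refl => exact Relation.ReflTransGen.refl
  | @tail u v' hcu huv ih =>
    exact ih.tail ⟨huv.1, ⟨huv.2.1, hcu⟩, ⟨huv.2.2, hcu.tail huv⟩⟩

lemma dirac [Fintype V] (h : ∀ n, 4 ≤ n → ¬ HasInducedCycle G n) :
    ∀ (N : ℕ) (s : Finset V), s.card ≤ N →
    (∃ a ∈ s, ∃ b ∈ s, a ≠ b ∧ ¬ G.Adj a b) →
    ∃ v ∈ s, ∃ w ∈ s, v ≠ w ∧ ¬ G.Adj v w ∧ Simp G s v ∧ Simp G s w := by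
  classical
  intro N
  induction N with
  | zero =>
    rintro s hs ⟨a, ha, -⟩
    have : s.card ≠ 0 := Finset.card_ne_zero_of_mem ha
    omega
  | succ N ih =>
    rintro s hcard ⟨a, ha, b, hb, hab, hnadj⟩
    -- minimal separator
    have sep0 : (s \ {a,b}) ⊆ s \ {a,b} ∧
        ¬ Relation.ReflTransGen (Rel G ((s : Set V) \ ↑(s \ ({a,b} : Finset V)))) a b := by
      refine ⟨subset_rfl, fun hr => ?_⟩
      rcases Relation.ReflTransGen.cases_head hr with heq | ⟨c, ⟨hadj, _, hmem2⟩, -⟩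
      · exact hab heq
      · obtain ⟨h1, h2⟩ : c ∈ s ∧ (c = a ∨ c = b) := by simpa using hmem2
        rcases h2 with rfl | rfl
        · exact G.irrefl hadj
        · exact hnadj hadj
    obtain ⟨S, hS, hSmin⟩ : ∃ S : Finset V, (S ⊆ s \ {a,b} ∧
        ¬ Relation.ReflTransGen (Rel G ((s : Set V) \ ↑S)) a b) ∧
        ∀ S' : Finset V, (S' ⊆ s \ {a,b} ∧
          ¬ Relation.ReflTransGen (Rel G ((s : Set V) \ ↑S')) a b) → S.card ≤ S'.card := by
      have hne : ((s \ {a,b}).powerset.filter (fun S => S ⊆ s \ {a,b} ∧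
          ¬ Relation.ReflTransGen (Rel G ((s : Set V) \ ↑S)) a b)).Nonempty :=
        ⟨s \ {a,b}, Finset.mem_filter.2 ⟨Finset.mem_powerset.2 subset_rfl, sep0⟩⟩
      obtain ⟨S, hSmem, hSmin⟩ := Finset.exists_min_image _ Finset.card hne
      exact ⟨S, (Finset.mem_filter.1 hSmem).2,
        fun S' hS' => hSmin S' (Finset.mem_filter.2 ⟨Finset.mem_powerset.2 hS'.1, hS'⟩)⟩
    have hSs : ∀ z ∈ S, z ∈ s ∧ z ≠ a ∧ z ≠ b := by
      intro z hz
      have := hS.1 hz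
      simp only [Finset.mem_sdiff, Finset.mem_insert, Finset.mem_singleton] at this
      tauto
    have haT : a ∈ (s : Set V) \ ↑S := ⟨ha, fun hmem => (hSs a hmem).2.1 rfl⟩
    have hbT : b ∈ (s : Set V) \ ↑S := ⟨hb, fun hmem => (hSs b hmem).2.2 rfl⟩
    have hsymm := rel_symm G ((s : Set V) \ ↑S)
    have hCmpT : ∀ c w, w ∈ Cmp G ((s : Set V) \ ↑S) c → w ∈ (s : Set V) \ ↑S := fun c w hw => hw.1
    have hAa : a ∈ Cmp G ((s : Set V) \ ↑S) a := ⟨haT, Relation.ReflTransGen.refl⟩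
    have hBb : b ∈ Cmp G ((s : Set V) \ ↑S) b := ⟨hbT, Relation.ReflTransGen.refl⟩
    have hABdisj : ∀ w, w ∈ Cmp G ((s : Set V) \ ↑S) a → w ∉ Cmp G ((s : Set V) \ ↑S) b := by
      rintro w ⟨-, hrw⟩ ⟨-, hrbw⟩
      exact hS.2 (hrw.trans ((@Relation.ReflTransGen.stdSymm _ _ ⟨fun _ _ h => hsymm h⟩).symm _ _ hrbw))
    have hnoedge : ∀ u ∈ Cmp G ((s : Set V) \ ↑S) a, ∀ w ∈ Cmp G ((s : Set V) \ ↑S) b,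
        ¬ G.Adj u w := by
      rintro u ⟨huT, hru⟩ w ⟨hwT, hrw⟩ hadj
      exact hS.2 ((hru.tail ⟨hadj, huT, hwT⟩).trans ((@Relation.ReflTransGen.stdSymm _ _ ⟨fun _ _ h => hsymm h⟩).symm _ _ hrw))
    have hclosed : ∀ c, ∀ u ∈ Cmp G ((s : Set V) \ ↑S) c, ∀ w ∈ s, G.Adj u w →
        w ∈ S ∨ w ∈ Cmp G ((s : Set V) \ ↑S) c := by
      intro c u hu w hws hadj
      by_cases hwS : w ∈ S
      · exact Or.inl hwS
      · exact Or.inr ⟨⟨hws, hwS⟩, hu.2.tail ⟨hadj, hu.1, ⟨hws, hwS⟩⟩⟩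
    -- every separator vertex has a neighbour in each component
    have nbr : ∀ (c : V), (c = a ∨ c = b) → ∀ z ∈ S,
        ∃ w, w ∈ Cmp G ((s : Set V) \ ↑S) c ∧ G.Adj z w := by
      intro c hc z hz
      have hcT : c ∈ (s : Set V) \ ↑S := by
        rcases hc with rfl | rfl
        · exact haT
        · exact hbT
      by_contra hno
      push_neg at hno
      have claim : ∀ w, Relation.ReflTransGen (Rel G ((s : Set V) \ ↑(S.erase z))) c w →
          w ∈ Cmp G ((s : Set V) \ ↑S) c := by
        intro w hw
        induction hw with
        | refl => exact ⟨hcT, Relation.ReflTransGen.refl⟩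
        | @tail u w hcu huw ih =>
          obtain ⟨hadj, huT', hwT'⟩ := huw
          by_cases hwz : w = z
          · subst hwz
            exact absurd hadj.symm (hno u ih)
          · have hwS : w ∉ S := fun hmem => hwT'.2 (Finset.mem_coe.2 (Finset.mem_erase.2 ⟨hwz, hmem⟩))
            exact ⟨⟨hwT'.1, hwS⟩, ih.2.tail ⟨hadj, ih.1, ⟨hwT'.1, hwS⟩⟩⟩
      have hsep' : (S.erase z) ⊆ s \ {a,b} ∧
          ¬ Relation.ReflTransGen (Rel G ((s : Set V) \ ↑(S.erase z))) a b := by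
        refine ⟨(S.erase_subset z).trans hS.1, fun hr => ?_⟩
        apply hS.2
        rcases hc with rfl | rfl
        · exact (claim b hr).2
        · exact (@Relation.ReflTransGen.stdSymm _ _ ⟨fun _ _ h => hsymm h⟩).symm _ _
            (claim a ((@Relation.ReflTransGen.stdSymm _ _ ⟨fun _ _ h => (rel_symm G _) h⟩).symm _ _ hr)).2
      have h1 := hSmin _ hsep'
      have h2 : (S.erase z).card < S.card := Finset.card_erase_lt_of_mem hz
      omega
    -- S is a clique
    have Sclique : ∀ p ∈ S, ∀ q ∈ S, p ≠ q → G.Adj p q := by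
      intro p hp q hq hpq
      by_contra hnpq
      obtain ⟨ap, hapA, hapadj⟩ := nbr a (Or.inl rfl) p hp
      obtain ⟨aq, haqA, haqadj⟩ := nbr a (Or.inl rfl) q hq
      obtain ⟨bp, hbpB, hbpadj⟩ := nbr b (Or.inr rfl) p hp
      obtain ⟨bq, hbqB, hbqadj⟩ := nbr b (Or.inr rfl) q hq
      have hpA : p ∉ Cmp G ((s : Set V) \ ↑S) a := fun hmem => hmem.1.2 hp
      have hqA : q ∉ Cmp G ((s : Set V) \ ↑S) a := fun hmem => hmem.1.2 hq
      have hpB : p ∉ Cmp G ((s : Set V) \ ↑S) b := fun hmem => hmem.1.2 hp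
      have hqB : q ∉ Cmp G ((s : Set V) \ ↑S) b := fun hmem => hmem.1.2 hq
      -- path through A from p to q
      have hconnA : Relation.ReflTransGen (Rel G (Cmp G ((s : Set V) \ ↑S) a)) ap aq :=
        ((@Relation.ReflTransGen.stdSymm _ _ ⟨fun _ _ h => (rel_symm G _) h⟩).symm _ _ (upgrade G _ a ap hapA.2)).trans
          (upgrade G _ a aq haqA.2)
      obtain ⟨mA, hmACand, hndA, hncA⟩ := exists_chordless G _ p q hnpq hpA hqA hpq
        (cand_of_conn G _ p q ap aq hapadj haqadj hapA hconnA)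
      have hconnB : Relation.ReflTransGen (Rel G (Cmp G ((s : Set V) \ ↑S) b)) bq bp :=
        ((@Relation.ReflTransGen.stdSymm _ _ ⟨fun _ _ h => (rel_symm G _) h⟩).symm _ _ (upgrade G _ b bq hbqB.2)).trans
          (upgrade G _ b bp hbpB.2)
      obtain ⟨mB, hmBCand, hndB, hncB⟩ := exists_chordless G _ q p
        (fun hadj => hnpq hadj.symm) hqB hpB (Ne.symm hpq)
        (cand_of_conn G _ q p bq bp hbqadj hbpadj hbqB hconnB)
      exact sep_cycle_false G h (Cmp G ((s : Set V) \ ↑S) a) (Cmp G ((s : Set V) \ ↑S) b)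
        p q mA mB hmACand.2.1 hmBCand.2.1 hmACand.1 hmBCand.1 hpB hqA hABdisj hnoedge
        hndA hndB hmACand.2.2 hmBCand.2.2 hncA hncB
    -- extraction of a simplicial vertex inside a component
    have key : ∀ (c z : V), (c = a ∨ c = b) → z ∈ s → z ∉ Cmp G ((s : Set V) \ ↑S) c →
        z ∉ S → ∃ v, v ∈ Cmp G ((s : Set V) \ ↑S) c ∧ v ∈ s ∧ Simp G s v := by
      intro c z hc hzs hzC hzS
      have hcT : c ∈ (s : Set V) \ ↑S := by
        rcases hc with rfl | rfl
        · exact haT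
        · exact hbT
      have hcs : c ∈ s := hcT.1
      have hcC : c ∈ Cmp G ((s : Set V) \ ↑S) c := ⟨hcT, Relation.ReflTransGen.refl⟩
      set sC : Finset V := s.filter (· ∈ Cmp G ((s : Set V) \ ↑S) c) ∪ S with hsC
      have hsub : sC ⊆ s := by
        intro u hu
        rcases Finset.mem_union.1 hu with hu | hu
        · exact (Finset.mem_filter.1 hu).1
        · exact (hSs u hu).1
      have hzsC : z ∉ sC := by
        intro hz
        rcases Finset.mem_union.1 hz with hz | hz
        · exact hzC (Finset.mem_filter.1 hz).2
        · exact hzS hz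
      have hcardC : sC.card ≤ N := by
        have h1 : sC ⊆ s.erase z := by
          intro u hu
          exact Finset.mem_erase.2 ⟨fun he => hzsC (he ▸ hu), hsub hu⟩
        have h2 := Finset.card_le_card h1
        have h3 : (s.erase z).card = s.card - 1 := Finset.card_erase_of_mem hzs
        have h4 : 1 ≤ s.card := Finset.card_pos.2 ⟨z, hzs⟩
        omega
      have closure : ∀ u, u ∈ Cmp G ((s : Set V) \ ↑S) c → ∀ w ∈ s, G.Adj u w → w ∈ sC := by
        intro u hu w hws hadj
        rcases hclosed c u hu w hws hadj with hw | hw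
        · exact Finset.mem_union_right _ hw
        · exact Finset.mem_union_left _ (Finset.mem_filter.2 ⟨hw.1.1, hw⟩)
      have memsC : ∀ v, v ∈ Cmp G ((s : Set V) \ ↑S) c → v ∈ s := fun v hv => hv.1.1
      by_cases hcomp : ∀ p ∈ sC, ∀ q ∈ sC, p ≠ q → G.Adj p q
      · exact ⟨c, hcC, hcs, fun p hp q hq hap haq hpq =>
          hcomp p (closure c hcC p hp hap) q (closure c hcC q hq haq) hpq⟩
      · push_neg at hcomp
        obtain ⟨p, hp, q, hq, hpq, hnpq⟩ := hcomp
        obtain ⟨v, hv, w, hw, hvw, hnvw, hSv, hSw⟩ := ih sC hcardC ⟨p, hp, q, hq, hpq, hnpq⟩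
        have hpick : ∃ v', v' ∈ Cmp G ((s : Set V) \ ↑S) c ∧ Simp G sC v' := by
          rcases Finset.mem_union.1 hv with hv' | hv'
          · exact ⟨v, (Finset.mem_filter.1 hv').2, hSv⟩
          · rcases Finset.mem_union.1 hw with hw' | hw'
            · exact ⟨w, (Finset.mem_filter.1 hw').2, hSw⟩
            · exact absurd (Sclique v hv' w hw' hvw) hnvw
        obtain ⟨v', hv'C, hv'S⟩ := hpick
        exact ⟨v', hv'C, memsC v' hv'C, fun p hp q hq hap haq hpq =>
          hv'S p (closure v' hv'C p hp hap) q (closure v' hv'C q hq haq) hap haq hpq⟩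
    have hbA : b ∉ Cmp G ((s : Set V) \ ↑S) a := fun hmem => hS.2 hmem.2
    have haB : a ∉ Cmp G ((s : Set V) \ ↑S) b := fun hmem =>
      hS.2 ((@Relation.ReflTransGen.stdSymm _ _ ⟨fun _ _ h => hsymm h⟩).symm _ _ hmem.2)
    have hbS : b ∉ S := fun hmem => (hSs b hmem).2.2 rfl
    have haS : a ∉ S := fun hmem => (hSs a hmem).2.1 rfl
    obtain ⟨vA, hvAC, hvAs, hSvA⟩ := key a b (Or.inl rfl) hb hbA hbS
    obtain ⟨vB, hvBC, hvBs, hSvB⟩ := key b a (Or.inr rfl) ha haB haS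
    refine ⟨vA, hvAs, vB, hvBs, ?_, hnoedge vA hvAC vB hvBC, hSvA, hSvB⟩
    intro heq
    exact hABdisj vA hvAC (heq ▸ hvBC)


lemma simp_ex [Fintype V] (h : ∀ n, 4 ≤ n → ¬ HasInducedCycle G n) (s : Finset V)
    (hs : s.Nonempty) : ∃ v ∈ s, Simp G s v := by
  classical
  by_cases hcomp : ∀ p ∈ s, ∀ q ∈ s, p ≠ q → G.Adj p q
  · obtain ⟨v, hv⟩ := hs
    exact ⟨v, hv, fun a ha b hb _ _ hab => hcomp a ha b hb hab⟩
  · push_neg at hcomp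
    obtain ⟨p, hp, q, hq, hpq, hnpq⟩ := hcomp
    obtain ⟨v, hv, -, -, -, -, hS, -⟩ := dirac G h s.card s le_rfl ⟨p, hp, q, hq, hpq, hnpq⟩
    exact ⟨v, hv, hS⟩

lemma exists_peo [Fintype V] (h : ∀ n, 4 ≤ n → ¬ HasInducedCycle G n) :
    ∀ (N : ℕ) (s : Finset V), s.card ≤ N →
    ∃ L : List V, L.Nodup ∧ (∀ x, x ∈ L ↔ x ∈ s) ∧
    ∀ (i j k : ℕ) (hi : i < L.length) (hj : j < L.length) (hk : k < L.length),
      i < j → i < k → j ≠ k → G.Adj (L[i]'hi) (L[j]'hj) → G.Adj (L[i]'hi) (L[k]'hk) →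
      G.Adj (L[j]'hj) (L[k]'hk) := by
  classical
  intro N
  induction N with
  | zero =>
    intro s hs
    have hse : s = ∅ := Finset.card_eq_zero.1 (Nat.le_zero.1 hs)
    refine ⟨[], by simp, by simp [hse], ?_⟩
    intro i j k hi
    simp at hi
  | succ N ih =>
    intro s hs
    rcases s.eq_empty_or_nonempty with rfl | hne
    · refine ⟨[], by simp, by simp, ?_⟩
      intro i j k hi
      simp at hi
    · obtain ⟨v, hv, hSimp⟩ := simp_ex G h s hne
      obtain ⟨L', hnd', hmem', hpeo'⟩ := ih (s.erase v) (by
        have h1 := Finset.card_erase_of_mem hv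
        have h2 : 1 ≤ s.card := Finset.card_pos.2 ⟨v, hv⟩
        omega)
      have hLs : ∀ x ∈ L', x ∈ s ∧ x ≠ v := by
        intro x hx
        have := (hmem' x).1 hx
        rw [Finset.mem_erase] at this
        exact ⟨this.2, this.1⟩
      refine ⟨v :: L', ?_, ?_, ?_⟩
      · exact List.nodup_cons.2 ⟨fun hvL => (hLs v hvL).2 rfl, hnd'⟩
      · intro x
        constructor
        · intro hx
          rcases List.mem_cons.1 hx with rfl | hx
          · exact hv
          · exact (hLs x hx).1
        · intro hx
          by_cases hxv : x = v
          · exact hxv ▸ List.mem_cons_self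
          · exact List.mem_cons.2 (Or.inr ((hmem' x).2 (Finset.mem_erase.2 ⟨hxv, hx⟩)))
      · intro i j k hi hj hk hij hik hjk hadj1 hadj2
        rcases i with _ | i
        · obtain ⟨j', rfl⟩ : ∃ j', j = j' + 1 := ⟨j - 1, by omega⟩
          obtain ⟨k', rfl⟩ : ∃ k', k = k' + 1 := ⟨k - 1, by omega⟩
          simp only [List.getElem_cons_succ, List.getElem_cons_zero] at hadj1 hadj2 ⊢
          have hjm : L'[j']'(by simpa using hj) ∈ s := (hLs _ (List.getElem_mem _)).1
          have hkm : L'[k']'(by simpa using hk) ∈ s := (hLs _ (List.getElem_mem _)).1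
          refine hSimp _ hjm _ hkm hadj1 hadj2 ?_
          intro heq
          exact hjk (congrArg Nat.succ ((hnd'.getElem_inj_iff).1 heq))
        · obtain ⟨j', rfl⟩ : ∃ j', j = j' + 1 := ⟨j - 1, by omega⟩
          obtain ⟨k', rfl⟩ : ∃ k', k = k' + 1 := ⟨k - 1, by omega⟩
          simp only [List.getElem_cons_succ] at hadj1 hadj2 ⊢
          exact hpeo' i j' k' (by simpa using hi) (by simpa using hj) (by simpa using hk)
            (by omega) (by omega) (by omega) hadj1 hadj2


end CCaux

/-- Every cluster ⋈ chordal graph is 2-simplicial: if `G1` is chordal and `G2` is a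
cluster graph, then `G1 ⊔ G2` admits a vertex ordering such that each closed later
neighborhood can be covered by at most two cliques. -/
theorem clusterChordal_twoSimplicial {V : Type*} [Fintype V]
    (G1 G2 : SimpleGraph V)
    (h1 : ∀ n, 4 ≤ n → ¬ HasInducedCycle G1 n)
    (h2 : ∃ s : Setoid V, ∀ u v : V, G2.Adj u v ↔ (s.r u v ∧ u ≠ v)) :
    ∃ r : LinearOrder V, ∀ v : V, ∃ c : V → Fin 2,
      ∀ u w : V, (u = v ∨ ((G1 ⊔ G2).Adj v u ∧ r.le v u)) →
        (w = v ∨ ((G1 ⊔ G2).Adj v w ∧ r.le v w)) →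
        c u = c w → u ≠ w → (G1 ⊔ G2).Adj u w := by
  classical
  obtain ⟨st, hst⟩ := h2
  obtain ⟨L, hnd, hmem, hpeo⟩ := CCaux.exists_peo G1 h1 (Finset.univ.card) Finset.univ le_rfl
  have hmemL : ∀ x : V, x ∈ L := fun x => (hmem x).2 (Finset.mem_univ x)
  have hidx : ∀ x : V, L.idxOf x < L.length := fun x => List.idxOf_lt_length_iff.2 (hmemL x)
  have hgetidx : ∀ x : V, L[L.idxOf x]'(hidx x) = x := fun x => by
    simpa using List.idxOf_get (hidx x)
  have finj : Function.Injective (fun x : V => L.idxOf x) := by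
    intro u w huw
    simp only at huw
    have e1 := hgetidx u
    have e2 := hgetidx w
    rw [← e1, ← e2]
    exact CCaux.getElem_congr' (hidx u) (hidx w) huw
  refine ⟨LinearOrder.lift' (fun x : V => L.idxOf x) finj, ?_⟩
  intro v
  refine ⟨fun u => if u = v ∨ st.r v u then 0 else 1, ?_⟩
  intro u w hu hw hc hne
  simp only at hc
  by_cases hu0 : u = v ∨ st.r v u <;> by_cases hw0 : w = v ∨ st.r v w
  · -- both colour 0 : inside the cluster of v
    rcases hu0 with rfl | hru
    · rcases hw0 with rfl | hrw
      · exact absurd rfl hne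
      · exact (SimpleGraph.sup_adj _ _ _ _).2
          (Or.inr ((hst u w).2 ⟨hrw, hne⟩))
    · rcases hw0 with rfl | hrw
      · exact (SimpleGraph.sup_adj _ _ _ _).2
          (Or.inr ((hst u w).2 ⟨st.iseqv.symm hru, hne⟩))
      · exact (SimpleGraph.sup_adj _ _ _ _).2
          (Or.inr ((hst u w).2 ⟨st.iseqv.trans (st.iseqv.symm hru) hrw, hne⟩))
  · rw [if_pos hu0, if_neg hw0] at hc
    exact absurd hc (by decide)
  · rw [if_neg hu0, if_pos hw0] at hc
    exact absurd hc (by decide)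
  · -- both colour 1 : later G1-neighbours of v
    push_neg at hu0 hw0
    rcases hu with rfl | ⟨hadj_u, hle_u⟩
    · exact absurd rfl hu0.1
    rcases hw with rfl | ⟨hadj_w, hle_w⟩
    · exact absurd rfl hw0.1
    have hg1u : G1.Adj v u := by
      rcases (SimpleGraph.sup_adj _ _ _ _).1 hadj_u with h | h
      · exact h
      · exact absurd ((hst v u).1 h).1 hu0.2
    have hg1w : G1.Adj v w := by
      rcases (SimpleGraph.sup_adj _ _ _ _).1 hadj_w with h | h
      · exact h
      · exact absurd ((hst v w).1 h).1 hw0.2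
    have hval_u : L.idxOf v ≤ L.idxOf u := hle_u
    have hval_w : L.idxOf v ≤ L.idxOf w := hle_w
    have hlt_u : L.idxOf v < L.idxOf u :=
      lt_of_le_of_ne hval_u (fun he => hg1u.ne (finj he))
    have hlt_w : L.idxOf v < L.idxOf w :=
      lt_of_le_of_ne hval_w (fun he => hg1w.ne (finj he))
    have hne_idx : L.idxOf u ≠ L.idxOf w := fun he => hne (finj he)
    have hres := hpeo (L.idxOf v) (L.idxOf u) (L.idxOf w)
      (hidx v) (hidx u) (hidx w) hlt_u hlt_w hne_idx
      (by rw [hgetidx v, hgetidx u]; exact hg1u)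
      (by rw [hgetidx v, hgetidx w]; exact hg1w)
    rw [hgetidx u, hgetidx w] at hres
    exact (SimpleGraph.sup_adj _ _ _ _).2 (Or.inl hres)
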